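/- arXiv:2111.15482 — 4 statements merged into one kernel-verified Lean document; each statement's English description precedes it below -/
import Mathlib

section
/- Let m : ℝ³ → ℝ³ be four times continuously differentiable (ContDiff ℝ 4). Then for every x ∈ ℝ³: m(x) × Δ²m(x) = Δ(y ↦ m(y) × Δm(y))(x) − 2 Σ_{k=1}^{3} ∂_k(y ↦ ∂_k m(y) × Δm(y))(x), and equivalently m(x) × Δ²m(x) = Δ(y ↦ m(y) × Δm(y))(x) − 2 Σ_{k=1}^{3} ∂_k m(x) × ∂_k(Δm)(x). -/
open MeasureTheory
open scoped RealInnerProductSpace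

noncomputable section
set_option maxHeartbeats 1000000

/-- ℝ³ as a Euclidean space. -/
abbrev E3 := EuclideanSpace ℝ (Fin 3)

/-- Partial derivative in the `k`-th standard coordinate direction. -/
noncomputable def pd {F : Type*} [NormedAddCommGroup F] [NormedSpace ℝ F]
    (k : Fin 3) (f : E3 → F) (x : E3) : F :=
  fderiv ℝ f x (EuclideanSpace.single k 1)

/-- Componentwise Laplacian `Δf = Σ_k ∂_k ∂_k f`. -/
noncomputable def lap {F : Type*} [NormedAddCommGroup F] [NormedSpace ℝ F]
    (f : E3 → F) (x : E3) : F :=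
  ∑ k : Fin 3, pd k (pd k f) x

/-- Cross product on ℝ³. -/
noncomputable def cross3 (a b : E3) : E3 :=
  (WithLp.equiv 2 (Fin 3 → ℝ)).symm
    (crossProduct ((WithLp.equiv 2 (Fin 3 → ℝ)) a) ((WithLp.equiv 2 (Fin 3 → ℝ)) b))

noncomputable def crossL : E3 →ₗ[ℝ] E3 →L[ℝ] E3 where
  toFun a := LinearMap.toContinuousLinearMap <|
    ((WithLp.linearEquiv 2 ℝ (Fin 3 → ℝ)).symm.toLinearMap.comp
      (crossProduct ((WithLp.equiv 2 (Fin 3 → ℝ)) a))).comp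
      (WithLp.linearEquiv 2 ℝ (Fin 3 → ℝ)).toLinearMap
  map_add' a b := by ext v; simp [map_add]
  map_smul' c a := by ext v; simp [_root_.map_smul]

noncomputable def crossCLM : E3 →L[ℝ] E3 →L[ℝ] E3 := LinearMap.toContinuousLinearMap crossL

lemma crossCLM_apply (a b : E3) : crossCLM a b = cross3 a b := rfl

lemma cross3_self (a : E3) : cross3 a a = 0 := by
  simp [cross3, cross_self]

lemma contDiff_pd {F : Type*} [NormedAddCommGroup F] [NormedSpace ℝ F]
    {n : WithTop ℕ∞} (k : Fin 3) {f : E3 → F} (hf : ContDiff ℝ (n + 1) f) :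
    ContDiff ℝ n (pd k f) :=
  (hf.fderiv_right le_rfl).clm_apply contDiff_const

/-- Leibniz rule for `pd` of a pointwise cross product. -/
lemma pd_cross (k : Fin 3) {f g : E3 → E3} {x : E3}
    (hf : DifferentiableAt ℝ f x) (hg : DifferentiableAt ℝ g x) :
    pd k (fun y => cross3 (f y) (g y)) x
      = cross3 (pd k f x) (g x) + cross3 (f x) (pd k g x) := by
  have hc : DifferentiableAt ℝ (fun y => crossCLM (f y)) x :=
    (crossCLM.differentiable.differentiableAt).comp x hf
  have h : pd k (fun y => crossCLM (f y) (g y)) x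
      = cross3 (pd k f x) (g x) + cross3 (f x) (pd k g x) := by
    unfold pd
    rw [fderiv_clm_apply hc hg]
    have hder : fderiv ℝ (fun y => crossCLM (f y)) x
        = crossCLM.comp (fderiv ℝ f x) := by
      exact (crossCLM.hasFDerivAt.comp x hf.hasFDerivAt).fderiv
    simp [hder, crossCLM_apply, add_comm]
  simpa only [crossCLM_apply] using h

lemma diff_cross {f g : E3 → E3} {x : E3}
    (hf : DifferentiableAt ℝ f x) (hg : DifferentiableAt ℝ g x) :
    DifferentiableAt ℝ (fun y => cross3 (f y) (g y)) x := by
  have h : (fun y => cross3 (f y) (g y)) = fun y => crossCLM (f y) (g y) := rfl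
  rw [h]
  exact DifferentiableAt.clm_apply ((crossCLM.differentiable.differentiableAt).comp x hf) hg

lemma pd_sum {F : Type*} [NormedAddCommGroup F] [NormedSpace ℝ F]
    (k : Fin 3) {f : Fin 3 → E3 → F} {x : E3}
    (hf : ∀ j, DifferentiableAt ℝ (f j) x) :
    pd k (fun y => ∑ j : Fin 3, f j y) x = ∑ j : Fin 3, pd k (f j) x := by
  unfold pd
  rw [fderiv_fun_sum (fun j _ => hf j)]
  simp

/-- Divergence structure of the leading term `m × Δ²m` of the LLG equation. -/
theorem divergence_structure_LLG (m : E3 → E3) (hm : ContDiff ℝ 4 m) (x : E3) :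
    cross3 (m x) (lap (lap m) x) =
        lap (fun y => cross3 (m y) (lap m y)) x
          - (2 : ℝ) • ∑ k : Fin 3, pd k (fun y => cross3 (pd k m y) (lap m y)) x
    ∧ cross3 (m x) (lap (lap m) x) =
        lap (fun y => cross3 (m y) (lap m y)) x
          - (2 : ℝ) • ∑ k : Fin 3, cross3 (pd k m x) (pd k (lap m) x) := by
  -- smoothness bookkeeping
  have hm3 : ∀ k, ContDiff ℝ 3 (pd k m) := fun k =>
    contDiff_pd k (hm.of_le (by norm_num))
  have hm2 : ∀ k j, ContDiff ℝ 2 (pd j (pd k m)) := fun k j =>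
    contDiff_pd j ((hm3 k).of_le (by norm_num))
  have hlap : ContDiff ℝ 2 (lap m) := by
    have : (lap m) = fun y => ∑ k : Fin 3, pd k (pd k m) y := rfl
    rw [this]
    exact ContDiff.sum fun k _ => hm2 k k
  have hpdlap : ∀ k, ContDiff ℝ 1 (pd k (lap m)) := fun k =>
    contDiff_pd k (hlap.of_le (by norm_num))
  have hm1 : ∀ k j i, ContDiff ℝ 1 (pd i (pd j (pd k m))) := fun k j i =>
    contDiff_pd i ((hm2 k j).of_le (by norm_num))
  have dm : ∀ y, DifferentiableAt ℝ m y := fun y =>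
    (hm.differentiable (by norm_num)).differentiableAt
  have dpm : ∀ k y, DifferentiableAt ℝ (pd k m) y := fun k y =>
    ((hm3 k).differentiable (by norm_num)).differentiableAt
  have dppm : ∀ k j y, DifferentiableAt ℝ (pd j (pd k m)) y := fun k j y =>
    ((hm2 k j).differentiable (by norm_num)).differentiableAt
  have dlap : ∀ y, DifferentiableAt ℝ (lap m) y := fun y =>
    (hlap.differentiable (by norm_num)).differentiableAt
  have dpdlap : ∀ k y, DifferentiableAt ℝ (pd k (lap m)) y := fun k y =>
    ((hpdlap k).differentiable (by norm_num)).differentiableAt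
  -- key expansion of the Laplacian of m × Δm
  have key : lap (fun y => cross3 (m y) (lap m y)) x
      = cross3 (lap m x) (lap m x)
        + (2 : ℝ) • ∑ k : Fin 3, cross3 (pd k m x) (pd k (lap m) x)
        + cross3 (m x) (lap (lap m) x) := by
    have step1 : ∀ k, (fun y => pd k (fun z => cross3 (m z) (lap m z)) y)
        = fun y => cross3 (pd k m y) (lap m y) + cross3 (m y) (pd k (lap m) y) := by
      intro k; funext y; exact pd_cross k (dm y) (dlap y)
    have step2 : ∀ k, pd k (pd k (fun z => cross3 (m z) (lap m z))) x
        = cross3 (pd k (pd k m) x) (lap m x) + cross3 (pd k m x) (pd k (lap m) x)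
          + (cross3 (pd k m x) (pd k (lap m) x) + cross3 (m x) (pd k (pd k (lap m)) x)) := by
      intro k
      have : pd k (pd k (fun z => cross3 (m z) (lap m z))) x
          = pd k (fun y => cross3 (pd k m y) (lap m y) + cross3 (m y) (pd k (lap m) y)) x := by
        rw [show pd k (fun z => cross3 (m z) (lap m z)) = _ from funext fun y =>
          congrFun (step1 k) y]
      rw [this]
      unfold pd
      rw [fderiv_fun_add]
      · simp only [ContinuousLinearMap.add_apply]
        have h1 := pd_cross k (dpm k x) (dlap x)
        have h2 := pd_cross k (dm x) (dpdlap k x)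
        unfold pd at h1 h2
        rw [h1, h2]
      · exact diff_cross (dpm k x) (dlap x)
      · exact diff_cross (dm x) (dpdlap k x)
    show (∑ k : Fin 3, pd k (pd k (fun z => cross3 (m z) (lap m z))) x) = _
    rw [Finset.sum_congr rfl fun k _ => step2 k]
    rw [Finset.sum_add_distrib, Finset.sum_add_distrib, Finset.sum_add_distrib]
    have e1 : (∑ k : Fin 3, cross3 (pd k (pd k m) x) (lap m x))
        = cross3 (lap m x) (lap m x) := by
      rw [show (lap m x) = ∑ k : Fin 3, pd k (pd k m) x from rfl]
      simp only [← crossCLM_apply]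
      rw [← ContinuousLinearMap.sum_apply, ← map_sum]
    have e2 : (∑ k : Fin 3, cross3 (m x) (pd k (pd k (lap m)) x))
        = cross3 (m x) (lap (lap m) x) := by
      rw [show (lap (lap m) x) = ∑ k : Fin 3, pd k (pd k (lap m)) x from rfl]
      simp only [← crossCLM_apply]
      rw [← map_sum]
    rw [e1, e2, two_smul]
    abel
  have zero_term : ∀ k, pd k (fun y => cross3 (pd k m y) (lap m y)) x
      = cross3 (pd k (pd k m) x) (lap m x) + cross3 (pd k m x) (pd k (lap m) x) :=
    fun k => pd_cross k (dpm k x) (dlap x)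
  have sum_eq : (∑ k : Fin 3, pd k (fun y => cross3 (pd k m y) (lap m y)) x)
      = cross3 (lap m x) (lap m x)
        + ∑ k : Fin 3, cross3 (pd k m x) (pd k (lap m) x) := by
    rw [Finset.sum_congr rfl fun k _ => zero_term k, Finset.sum_add_distrib]
    congr 1
    rw [show (lap m x) = ∑ k : Fin 3, pd k (pd k m) x from rfl]
    simp only [← crossCLM_apply]
    rw [← ContinuousLinearMap.sum_apply, ← map_sum]
  constructor
  · rw [key, sum_eq, cross3_self, smul_add]
    simp only [smul_zero, zero_add]
    abel
  · rw [key, cross3_self]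
    abel
end
end

section
/- Let m : ℝ³ → ℝ³ be four times continuously differentiable (ContDiff ℝ 4) with ‖m(x)‖ = 1 for all x ∈ ℝ³. Then for every x ∈ ℝ³: −⟪m(x), Δ²m(x)⟫ = ‖Δm(x)‖² + Δ(y ↦ Σ_{k=1}^{3} ‖∂_k m(y)‖²)(x) + 2 Σ_{k=1}^{3} ⟪∂_k m(x), ∂_k(Δm)(x)⟫. -/
open scoped RealInnerProductSpace

noncomputable section

lemma pd_contDiff {F : Type*} [NormedAddCommGroup F] [NormedSpace ℝ F]
    {n m : WithTop ℕ∞} {f : E3 → F} (hf : ContDiff ℝ n f) (h : m + 1 ≤ n) (k : Fin 3) :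
    ContDiff ℝ m (pd k f) :=
  (hf.fderiv_right h).clm_apply contDiff_const

lemma pd_inner_apply {f g : E3 → E3} {x : E3}
    (hf : DifferentiableAt ℝ f x) (hg : DifferentiableAt ℝ g x) (k : Fin 3) :
    pd k (fun y => ⟪f y, g y⟫) x = ⟪f x, pd k g x⟫ + ⟪pd k f x, g x⟫ :=
  fderiv_inner_apply ℝ hf hg _

lemma pd_add {F : Type*} [NormedAddCommGroup F] [NormedSpace ℝ F]
    {f g : E3 → F} {x : E3} (hf : DifferentiableAt ℝ f x)
    (hg : DifferentiableAt ℝ g x) (k : Fin 3) :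
    pd k (fun y => f y + g y) x = pd k f x + pd k g x := by
  exact congrArg (fun L => L (EuclideanSpace.single k 1)) (hf.hasFDerivAt.add hg.hasFDerivAt).fderiv

lemma pd_neg {F : Type*} [NormedAddCommGroup F] [NormedSpace ℝ F]
    (f : E3 → F) (k : Fin 3) :
    pd k (fun y => -f y) = fun x => -pd k f x := by
  funext x; simp [pd, fderiv_neg]

lemma lap_neg {F : Type*} [NormedAddCommGroup F] [NormedSpace ℝ F]
    (f : E3 → F) (x : E3) :
    lap (fun y => -f y) x = -lap f x := by
  simp only [lap, pd_neg, ← Finset.sum_neg_distrib]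

lemma lap_const {F : Type*} [NormedAddCommGroup F] [NormedSpace ℝ F]
    (c : F) (x : E3) : lap (fun _ => c) x = 0 := by
  have h : ∀ k : Fin 3, pd k (fun _ : E3 => c) = fun _ => (0 : F) :=
    fun k => funext fun y => by simp [pd]
  simp [lap, h, pd]

lemma lap_inner (f g : E3 → E3) (hf : ContDiff ℝ 2 f) (hg : ContDiff ℝ 2 g) (x : E3) :
    lap (fun y => ⟪f y, g y⟫) x
      = ⟪f x, lap g x⟫ + 2 * ∑ k : Fin 3, ⟪pd k f x, pd k g x⟫ + ⟪lap f x, g x⟫ := by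
  have hfd : Differentiable ℝ f := hf.differentiable (by norm_num)
  have hgd : Differentiable ℝ g := hg.differentiable (by norm_num)
  have hfp : ∀ k, Differentiable ℝ (pd k f) := fun k =>
    (pd_contDiff (m := 1) hf (by norm_num) k).differentiable one_ne_zero
  have hgp : ∀ k, Differentiable ℝ (pd k g) := fun k =>
    (pd_contDiff (m := 1) hg (by norm_num) k).differentiable one_ne_zero
  have h1 : ∀ k : Fin 3, pd k (pd k (fun y => ⟪f y, g y⟫)) x
      = (⟪f x, pd k (pd k g) x⟫ + ⟪pd k f x, pd k g x⟫)
        + (⟪pd k f x, pd k g x⟫ + ⟪pd k (pd k f) x, g x⟫) := by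
    intro k
    have e1 : pd k (fun y => ⟪f y, g y⟫)
        = fun y => (fun z => ⟪f z, pd k g z⟫) y + (fun z => ⟪pd k f z, g z⟫) y :=
      funext fun y => pd_inner_apply (hfd y) (hgd y) k
    rw [e1, pd_add ((hfd x).inner ℝ (hgp k x)) ((hfp k x).inner ℝ (hgd x)) k,
      pd_inner_apply (hfd x) (hgp k x) k, pd_inner_apply (hfp k x) (hgd x) k]
  simp only [lap]
  rw [Finset.sum_congr rfl fun k _ => h1 k, inner_sum, sum_inner, Finset.mul_sum,
    ← Finset.sum_add_distrib, ← Finset.sum_add_distrib]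
  exact Finset.sum_congr rfl fun k _ => by ring

/-- The Lagrange multiplier identity `Λ = -m·Δ²m = |Δm|² + Δ|∇m|² + 2∇m·∇Δm`
for unit-length fields. -/
theorem lagrange_multiplier_identity (m : E3 → E3) (hm : ContDiff ℝ 4 m)
    (hunit : ∀ x, ‖m x‖ = 1) (x : E3) :
    -⟪m x, lap (lap m) x⟫ =
      ‖lap m x‖ ^ 2 + lap (fun y => ∑ k : Fin 3, ‖pd k m y‖ ^ 2) x
        + 2 * ∑ k : Fin 3, ⟪pd k m x, pd k (lap m) x⟫ := by
  have hm2 : ContDiff ℝ 2 m := hm.of_le (by norm_num)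
  have hlapm : ContDiff ℝ 2 (lap m) := by
    have h : ∀ k : Fin 3, ContDiff ℝ 2 (pd k (pd k m)) := fun k =>
      pd_contDiff (pd_contDiff (m := 3) hm (by norm_num) k) (by norm_num) k
    exact ContDiff.sum fun k _ => h k
  have hconst : (fun y => ⟪m y, m y⟫) = fun _ => (1 : ℝ) := by
    funext y; rw [real_inner_self_eq_norm_sq, hunit y]; norm_num
  have hG : (fun y => ⟪m y, lap m y⟫) = fun y => -(∑ k : Fin 3, ‖pd k m y‖ ^ 2) := by
    funext y
    have h0 := lap_inner m m hm2 hm2 y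
    rw [hconst, lap_const] at h0
    have hsym : ⟪lap m y, m y⟫ = ⟪m y, lap m y⟫ := real_inner_comm _ _
    have hsq : ∀ k : Fin 3, ⟪pd k m y, pd k m y⟫ = ‖pd k m y‖ ^ 2 := fun k =>
      real_inner_self_eq_norm_sq _
    rw [hsym, Finset.sum_congr rfl fun k _ => hsq k] at h0
    linarith
  have key := lap_inner m (lap m) hm2 hlapm x
  rw [hG, lap_neg] at key
  have h1 : ⟪lap m x, lap m x⟫ = ‖lap m x‖ ^ 2 := real_inner_self_eq_norm_sq _
  rw [h1] at key
  linarith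
end
end

section
/- Let m : ℝ³ → ℝ³ be twice continuously differentiable (ContDiff ℝ 2) with ‖m(x)‖ = 1 for all x ∈ ℝ³. Define the emergent magnetic field b : ℝ³ → ℝ³ by b₁ = ⟪m, ∂₂m × ∂₃m⟫, b₂ = ⟪m, ∂₃m × ∂₁m⟫, b₃ = ⟪m, ∂₁m × ∂₂m⟫ (i.e., b_i = ½ ε_{ijk} m·(∂_j m × ∂_k m)). Then the emergent Gauß law holds: Σ_{i=1}^{3} ∂_i b_i(x) = 0 for all x ∈ ℝ³. -/
open scoped RealInnerProductSpace

noncomputable section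

/-- The emergent magnetic field `b_i = ½ ε_{ijk} m·(∂_j m × ∂_k m)`
(indices here are 0-based: `b₁ = m·(∂₂m × ∂₃m)` etc.). -/
noncomputable def emb (m : E3 → E3) (x : E3) : E3 :=
  (WithLp.equiv 2 (Fin 3 → ℝ)).symm
    ![⟪m x, cross3 (pd 1 m x) (pd 2 m x)⟫,
      ⟪m x, cross3 (pd 2 m x) (pd 0 m x)⟫,
      ⟪m x, cross3 (pd 0 m x) (pd 1 m x)⟫]

lemma hasFDerivAt_comp_proj (f : E3 → E3) (x : E3) (i : Fin 3) (hf : DifferentiableAt ℝ f x) :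
    HasFDerivAt (fun y => f y i) ((EuclideanSpace.proj i).comp (fderiv ℝ f x)) x := by
  exact ((EuclideanSpace.proj i).hasFDerivAt).comp x hf.hasFDerivAt

lemma inner_cross3 (a b c : E3) :
    ⟪a, cross3 b c⟫ = a 0 * (b 1 * c 2 - b 2 * c 1) + a 1 * (b 2 * c 0 - b 0 * c 2)
      + a 2 * (b 0 * c 1 - b 1 * c 0) := by
  simp [cross3, crossProduct, PiLp.inner_apply, Fin.sum_univ_three]
  ring

lemma pd_inner_cross (f g h : E3 → E3) (x : E3) (k : Fin 3)
    (hf : DifferentiableAt ℝ f x) (hg : DifferentiableAt ℝ g x)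
    (hh : DifferentiableAt ℝ h x) :
    pd k (fun y => ⟪f y, cross3 (g y) (h y)⟫) x
      = ⟪pd k f x, cross3 (g x) (h x)⟫ + ⟪f x, cross3 (pd k g x) (h x)⟫
        + ⟪f x, cross3 (g x) (pd k h x)⟫ := by
  have Hf := fun i => hasFDerivAt_comp_proj f x i hf
  have Hg := fun i => hasFDerivAt_comp_proj g x i hg
  have Hh := fun i => hasFDerivAt_comp_proj h x i hh
  have key : HasFDerivAt (fun y => ⟪f y, cross3 (g y) (h y)⟫)
      ((f x 0 • (((g x 1 • (EuclideanSpace.proj 2).comp (fderiv ℝ h x)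
          + h x 2 • (EuclideanSpace.proj 1).comp (fderiv ℝ g x))
          - (g x 2 • (EuclideanSpace.proj 1).comp (fderiv ℝ h x)
          + h x 1 • (EuclideanSpace.proj 2).comp (fderiv ℝ g x))))
        + (g x 1 * h x 2 - g x 2 * h x 1) • (EuclideanSpace.proj 0).comp (fderiv ℝ f x))
      + (f x 1 • (((g x 2 • (EuclideanSpace.proj 0).comp (fderiv ℝ h x)
          + h x 0 • (EuclideanSpace.proj 2).comp (fderiv ℝ g x))
          - (g x 0 • (EuclideanSpace.proj 2).comp (fderiv ℝ h x)
          + h x 2 • (EuclideanSpace.proj 0).comp (fderiv ℝ g x))))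
        + (g x 2 * h x 0 - g x 0 * h x 2) • (EuclideanSpace.proj 1).comp (fderiv ℝ f x))
      + (f x 2 • (((g x 0 • (EuclideanSpace.proj 1).comp (fderiv ℝ h x)
          + h x 1 • (EuclideanSpace.proj 0).comp (fderiv ℝ g x))
          - (g x 1 • (EuclideanSpace.proj 0).comp (fderiv ℝ h x)
          + h x 0 • (EuclideanSpace.proj 1).comp (fderiv ℝ g x))))
        + (g x 0 * h x 1 - g x 1 * h x 0) • (EuclideanSpace.proj 2).comp (fderiv ℝ f x))) x := by
    have e : (fun y => ⟪f y, cross3 (g y) (h y)⟫)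
        = fun y => (fun y => f y 0) y * ((fun y => g y 1) y * (fun y => h y 2) y
              - (fun y => g y 2) y * (fun y => h y 1) y)
          + (fun y => f y 1) y * ((fun y => g y 2) y * (fun y => h y 0) y
              - (fun y => g y 0) y * (fun y => h y 2) y)
          + (fun y => f y 2) y * ((fun y => g y 0) y * (fun y => h y 1) y
              - (fun y => g y 1) y * (fun y => h y 0) y) := by
      funext y; rw [inner_cross3]
    rw [e]
    exact (((Hf 0).mul (((Hg 1).mul (Hh 2)).sub ((Hg 2).mul (Hh 1)))).add
      ((Hf 1).mul (((Hg 2).mul (Hh 0)).sub ((Hg 0).mul (Hh 2))))).add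
      ((Hf 2).mul (((Hg 0).mul (Hh 1)).sub ((Hg 1).mul (Hh 0))))
  unfold pd
  rw [key.fderiv]
  simp only [ContinuousLinearMap.add_apply, ContinuousLinearMap.smul_apply,
    ContinuousLinearMap.sub_apply, ContinuousLinearMap.coe_comp', Function.comp_apply,
    PiLp.proj_apply, smul_eq_mul]
  rw [inner_cross3, inner_cross3, inner_cross3]
  ring

lemma differentiable_pd (m : E3 → E3) (hm : ContDiff ℝ 2 m) (a : Fin 3) :
    Differentiable ℝ (pd a m) := by
  have h1 : ContDiff ℝ 1 (fderiv ℝ m) := hm.fderiv_right (le_refl 2)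
  exact (h1.clm_apply contDiff_const).differentiable one_ne_zero

lemma clairaut (m : E3 → E3) (hm : ContDiff ℝ 2 m) (x : E3) (a b : Fin 3) :
    pd a (pd b m) x = pd b (pd a m) x := by
  have hsym := hm.contDiffAt.isSymmSndFDerivAt (x := x) (by simp)
  have h1 : ContDiff ℝ 1 (fderiv ℝ m) := hm.fderiv_right (le_refl 2)
  have key : ∀ c d : Fin 3, pd c (pd d m) x
      = fderiv ℝ (fderiv ℝ m) x (EuclideanSpace.single c 1) (EuclideanSpace.single d 1) := by
    intro c d
    have hD := ((ContinuousLinearMap.apply ℝ E3 (EuclideanSpace.single d 1)).hasFDerivAt.comp x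
      ((h1.differentiable one_ne_zero) x).hasFDerivAt)
    have hst : pd d m = ⇑(ContinuousLinearMap.apply ℝ E3 (EuclideanSpace.single d 1))
        ∘ fderiv ℝ m := rfl
    rw [pd, hst, hD.fderiv]
    simp
  rw [key, key, hsym]

lemma orth (m : E3 → E3) (hm : ContDiff ℝ 2 m) (hunit : ∀ x, ‖m x‖ = 1) (x : E3) (k : Fin 3) :
    ⟪m x, pd k m x⟫ = 0 := by
  have hd : Differentiable ℝ m := hm.differentiable two_ne_zero
  have hc : (fun y => ⟪m y, m y⟫) = fun _ => (1:ℝ) := by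
    funext y
    rw [real_inner_self_eq_norm_sq, hunit y]; norm_num
  have h0 : fderiv ℝ (fun y => ⟪m y, m y⟫) x (EuclideanSpace.single k 1) = 0 := by
    rw [hc]; simp
  rw [fderiv_inner_apply ℝ (hd x) (hd x)] at h0
  rw [real_inner_comm (m x)] at h0
  unfold pd
  linarith

lemma key_det (a u v w : Fin 3 → ℝ) (ha : a 0*a 0 + a 1*a 1 + a 2*a 2 = 1)
    (h0 : a 0*u 0 + a 1*u 1 + a 2*u 2 = 0)
    (h1 : a 0*v 0 + a 1*v 1 + a 2*v 2 = 0)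
    (h2 : a 0*w 0 + a 1*w 1 + a 2*w 2 = 0) :
    u 0*(v 1*w 2 - v 2*w 1) + u 1*(v 2*w 0 - v 0*w 2) + u 2*(v 0*w 1 - v 1*w 0) = 0 := by
  linear_combination
    (a 0*(v 1*w 2 - v 2*w 1) + a 1*(v 2*w 0 - v 0*w 2) + a 2*(v 0*w 1 - v 1*w 0))*h0
    + (a 0*(w 1*u 2 - w 2*u 1) + a 1*(w 2*u 0 - w 0*u 2) + a 2*(w 0*u 1 - w 1*u 0))*h1
    + (a 0*(u 1*v 2 - u 2*v 1) + a 1*(u 2*v 0 - u 0*v 2) + a 2*(u 0*v 1 - u 1*v 0))*h2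
    - (u 0*(v 1*w 2 - v 2*w 1) + u 1*(v 2*w 0 - v 0*w 2) + u 2*(v 0*w 1 - v 1*w 0))*ha

/-- The emergent Gauß law `∇·b = 0` for a unit-length field `m`. -/
theorem emergent_gauss_law (m : E3 → E3) (hm : ContDiff ℝ 2 m)
    (hunit : ∀ x, ‖m x‖ = 1) (x : E3) :
    ∑ i : Fin 3, pd i (fun y => emb m y i) x = 0 := by
  have hd : Differentiable ℝ m := hm.differentiable two_ne_zero
  have hdp := differentiable_pd m hm
  have e0 : (fun y => emb m y 0) = fun y => ⟪m y, cross3 (pd 1 m y) (pd 2 m y)⟫ := by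
    funext y; simp [emb]
  have e1 : (fun y => emb m y 1) = fun y => ⟪m y, cross3 (pd 2 m y) (pd 0 m y)⟫ := by
    funext y; simp [emb]
  have e2 : (fun y => emb m y 2) = fun y => ⟪m y, cross3 (pd 0 m y) (pd 1 m y)⟫ := by
    funext y; simp [emb]
  rw [Fin.sum_univ_three, e0, e1, e2,
    pd_inner_cross m (pd 1 m) (pd 2 m) x 0 (hd x) ((hdp 1) x) ((hdp 2) x),
    pd_inner_cross m (pd 2 m) (pd 0 m) x 1 (hd x) ((hdp 2) x) ((hdp 0) x),
    pd_inner_cross m (pd 0 m) (pd 1 m) x 2 (hd x) ((hdp 0) x) ((hdp 1) x),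
    clairaut m hm x 1 0, clairaut m hm x 2 0, clairaut m hm x 2 1]
  have ha : m x 0 * m x 0 + m x 1 * m x 1 + m x 2 * m x 2 = 1 := by
    have h : ⟪m x, m x⟫ = 1 := by rw [real_inner_self_eq_norm_sq, hunit x]; norm_num
    simp only [PiLp.inner_apply, Fin.sum_univ_three, RCLike.inner_apply, conj_trivial] at h
    linear_combination h
  have ho : ∀ k : Fin 3, m x 0 * pd k m x 0 + m x 1 * pd k m x 1 + m x 2 * pd k m x 2 = 0 := by
    intro k
    have := orth m hm hunit x k
    simp only [PiLp.inner_apply, Fin.sum_univ_three, RCLike.inner_apply, conj_trivial] at this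
    linear_combination this
  have HD := key_det (fun i => m x i) (fun i => pd 0 m x i) (fun i => pd 1 m x i)
    (fun i => pd 2 m x i) ha (ho 0) (ho 1) (ho 2)
  simp only [inner_cross3]
  simp only at HD
  linear_combination 3 * HD
end
end

section
/- Let 1 ≤ p ≤ ∞ and let q be its conjugate exponent (1/p + 1/q = 1), let 0 ≤ k' ≤ k < ∞ be real numbers, and set ℓ := (k + 3/q) / (k' + 3/q + (k − k')/p). Then there exists a constant C = C(k, k', p) > 0 such that for every measurable function f : ℝ³ × ℝ³ → [0, ∞) with ‖f‖_{L^p(ℝ³×ℝ³)} < ∞ and finite k-th velocity moment M_k(f) := ∫_{ℝ³}∫_{ℝ³} ‖v‖^k f(x, v) dv dx < ∞, the k'-th moment density m_{k'}(f)(x) := ∫_{ℝ³} ‖v‖^{k'} f(x, v) dv belongs to L^ℓ(ℝ³) and satisfies ‖m_{k'}(f)‖_{L^ℓ(ℝ³)} ≤ C ‖f‖_{L^p}^{(k−k')/(k+3/q)} · M_k(f)^{(k'+3/q)/(k+3/q)}. -/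
open MeasureTheory ENNReal

noncomputable section

lemma tendsto_aux (b : ℝ≥0∞) (hb : b ≠ ⊤) (t : ℝ) (ht : 0 < t) :
    Filter.Tendsto (fun n : ℕ => b * ((n : ℝ≥0∞) + 1) ^ (-t)) Filter.atTop (nhds 0) := by
  have h1 : Filter.Tendsto (fun n : ℕ => ((n : ℝ≥0∞) + 1)) Filter.atTop (nhds ⊤) := by
    rw [ENNReal.tendsto_nhds_top_iff_nat]
    intro m
    filter_upwards [Filter.eventually_ge_atTop m] with n hn
    calc (m : ℝ≥0∞) ≤ (n : ℝ≥0∞) := by exact_mod_cast hn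
    _ < (n : ℝ≥0∞) + 1 := ENNReal.lt_add_right (by simp) one_ne_zero
  have h2 : Filter.Tendsto (fun n : ℕ => ((n : ℝ≥0∞) + 1) ^ (-t)) Filter.atTop
      (nhds 0) := by
    have := (ENNReal.continuous_rpow_const (y := -t)).tendsto ⊤ |>.comp h1
    simpa [Function.comp_def, ENNReal.top_rpow_of_neg (neg_lt_zero.2 ht)] using this
  simpa using ENNReal.Tendsto.const_mul h2 (Or.inr hb)

lemma opt_lemma (s t : ℝ) (hs : 0 ≤ s) (ht : 0 < t) (a b m : ℝ≥0∞) (ha : a ≠ ⊤) (hb : b ≠ ⊤)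
    (h : ∀ r : ℝ≥0∞, r ≠ 0 → r ≠ ⊤ → m ≤ a * r ^ s + b * r ^ (-t)) :
    m ≤ 2 * a ^ (t / (s + t)) * b ^ (s / (s + t)) := by
  have hst : 0 < s + t := by linarith
  rcases eq_or_ne a 0 with rfl | ha0
  · have hm : m ≤ 0 := by
      refine ge_of_tendsto (tendsto_aux b hb t ht) ?_
      filter_upwards with n
      have := h ((n : ℝ≥0∞) + 1) (by simp) (by simp)
      simpa using this
    simp only [nonpos_iff_eq_zero] at hm
    simp [hm]
  rcases eq_or_ne b 0 with rfl | hb0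
  · rcases eq_or_lt_of_le hs with hs0 | hs0
    · have h1 := h 1 one_ne_zero one_ne_top
      simp only [ENNReal.one_rpow, mul_one, zero_mul, add_zero] at h1
      have : (0:ℝ≥0∞) ^ (s / (s + t)) = 1 := by rw [← hs0]; simp
      rw [this, mul_one, ← hs0, zero_add, div_self ht.ne', ENNReal.rpow_one]
      calc m ≤ a := h1
      _ = 1 * a := (one_mul a).symm
      _ ≤ 2 * a := by gcongr; exact one_le_two
    · have hm : m ≤ 0 := by
        refine ge_of_tendsto (tendsto_aux a ha s hs0) ?_
        filter_upwards with n
        have := h (((n : ℝ≥0∞) + 1)⁻¹) (by simp) (by simp)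
        rw [← ENNReal.rpow_neg_one, ← ENNReal.rpow_mul, ← ENNReal.rpow_mul] at this
        simpa [mul_comm] using this
      simp only [nonpos_iff_eq_zero] at hm
      simp [hm]
  · set r : ℝ≥0∞ := b ^ (1 / (s + t)) * a ^ (-(1 / (s + t))) with hr
    have hbst : b ^ (1 / (s + t)) ≠ ⊤ := by simp [ENNReal.rpow_eq_top_iff, hb0, hb]
    have hast : a ^ (-(1 / (s + t))) ≠ ⊤ := by
      intro hcon
      rcases ENNReal.rpow_eq_top_iff.1 hcon with ⟨h1, _⟩ | ⟨h1, _⟩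
      exacts [ha0 h1, ha h1]
    have hr0 : r ≠ 0 := by
      rw [hr, Ne, mul_eq_zero]
      rintro (hcon | hcon) <;> rcases ENNReal.rpow_eq_zero_iff.1 hcon with ⟨h1, _⟩ | ⟨h1, _⟩
      exacts [hb0 h1, hb h1, ha0 h1, ha h1]
    have hrt : r ≠ ⊤ := ENNReal.mul_ne_top hbst hast
    have haa : ∀ c : ℝ, a * a ^ (-c) = a ^ (1 - c) := by
      intro c
      nth_rewrite 1 [← ENNReal.rpow_one a]
      rw [← ENNReal.rpow_add _ _ ha0 ha, sub_eq_add_neg]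
    have hbb : ∀ c : ℝ, b * b ^ (-c) = b ^ (1 - c) := by
      intro c
      nth_rewrite 1 [← ENNReal.rpow_one b]
      rw [← ENNReal.rpow_add _ _ hb0 hb, sub_eq_add_neg]
    have key1 : a * r ^ s = a ^ (t / (s + t)) * b ^ (s / (s + t)) := by
      rw [hr, ENNReal.mul_rpow_of_ne_top hbst hast, ← ENNReal.rpow_mul, ← ENNReal.rpow_mul]
      rw [show (1 / (s + t)) * s = s / (s + t) by ring,
          show (-(1 / (s + t))) * s = -(s / (s + t)) by ring]
      rw [mul_comm (b ^ (s / (s + t))) _, ← mul_assoc, haa,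
          show 1 - s / (s + t) = t / (s + t) by field_simp; ring]
    have key2 : b * r ^ (-t) = a ^ (t / (s + t)) * b ^ (s / (s + t)) := by
      rw [hr, ENNReal.mul_rpow_of_ne_top hbst hast, ← ENNReal.rpow_mul, ← ENNReal.rpow_mul]
      rw [show (1 / (s + t)) * (-t) = -(t / (s + t)) by ring,
          show (-(1 / (s + t))) * (-t) = t / (s + t) by ring]
      rw [← mul_assoc, hbb, show 1 - t / (s + t) = s / (s + t) by field_simp; ring, mul_comm]
    calc m ≤ a * r ^ s + b * r ^ (-t) := h r hr0 hrt
    _ = 2 * a ^ (t / (s + t)) * b ^ (s / (s + t)) := by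
        rw [key1, key2]; ring

lemma vB_pos : 0 < volume (Metric.ball (0 : E3) 1) := Metric.measure_ball_pos _ _ one_pos
lemma vB_lt_top : volume (Metric.ball (0 : E3) 1) < ⊤ := measure_ball_lt_top

lemma ball_rpow_bound (c R : ℝ) (hc : 0 ≤ c) (hR : 0 < R) :
    ∫⁻ v in Metric.closedBall (0 : E3) R, ENNReal.ofReal (‖v‖ ^ c)
      ≤ ENNReal.ofReal R ^ (c + 3) * volume (Metric.ball (0 : E3) 1) := by
  have h1 : ∫⁻ v in Metric.closedBall (0 : E3) R, ENNReal.ofReal (‖v‖ ^ c)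
      ≤ ∫⁻ _ in Metric.closedBall (0 : E3) R, ENNReal.ofReal (R ^ c) := by
    refine setLIntegral_mono' measurableSet_closedBall fun v hv => ?_
    exact ENNReal.ofReal_le_ofReal
      (Real.rpow_le_rpow (norm_nonneg _) (mem_closedBall_zero_iff.1 hv) hc)
  refine h1.trans ?_
  rw [setLIntegral_const, Measure.addHaar_closedBall volume 0 hR.le]
  rw [show (Module.finrank ℝ E3) = 3 from finrank_euclideanSpace_fin, ← mul_assoc]
  gcongr
  rw [← Real.rpow_natCast R 3, ← ENNReal.ofReal_rpow_of_pos hR, ← ENNReal.ofReal_rpow_of_pos hR,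
    ← ENNReal.rpow_add _ _ (ENNReal.ofReal_pos.2 hR).ne' ENNReal.ofReal_ne_top]
  norm_num

lemma tail_bound (k k' : ℝ) (hkk : k' ≤ k) (R : ℝ) (hR : 0 < R) (g : E3 → ℝ≥0∞)
    (hg : Measurable g) :
    ∫⁻ v in (Metric.closedBall (0 : E3) R)ᶜ, ENNReal.ofReal (‖v‖ ^ k') * g v
      ≤ ENNReal.ofReal R ^ (-(k - k')) * ∫⁻ v, ENNReal.ofReal (‖v‖ ^ k) * g v := by
  have h1 : ∫⁻ v in (Metric.closedBall (0 : E3) R)ᶜ, ENNReal.ofReal (‖v‖ ^ k') * g v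
      ≤ ∫⁻ v in (Metric.closedBall (0 : E3) R)ᶜ,
          ENNReal.ofReal R ^ (-(k - k')) * (ENNReal.ofReal (‖v‖ ^ k) * g v) := by
    refine setLIntegral_mono' measurableSet_closedBall.compl fun v hv => ?_
    have hv' : R < ‖v‖ := by
      simpa [Metric.mem_closedBall, not_le, Set.mem_compl_iff, mem_closedBall_zero_iff] using hv
    have hvpos : 0 < ‖v‖ := hR.trans hv'
    rw [← mul_assoc]
    gcongr ?_ * g v
    rw [ENNReal.ofReal_rpow_of_pos hR, ← ENNReal.ofReal_mul (by positivity)]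
    refine ENNReal.ofReal_le_ofReal ?_
    calc ‖v‖ ^ k' = ‖v‖ ^ (-(k - k')) * ‖v‖ ^ k := by
          rw [← Real.rpow_add hvpos]; ring_nf
    _ ≤ R ^ (-(k - k')) * ‖v‖ ^ k :=
          mul_le_mul_of_nonneg_right
            (Real.rpow_le_rpow_of_nonpos hR hv'.le (by linarith))
            (Real.rpow_nonneg (norm_nonneg v) k)
  refine h1.trans ?_
  rw [lintegral_const_mul' _ _ (by simp [ENNReal.rpow_eq_top_iff]; intro h; exact absurd h hR.not_ge)]
  gcongr
  exact Measure.restrict_le_self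

lemma holder_simple (u w : E3 → ℝ≥0∞) (hu : AEMeasurable u volume) (hw : AEMeasurable w volume)
    (γ δ : ℝ) (hγ : 0 < γ) (hδ : 0 ≤ δ) (hγδ : γ + δ = 1) :
    ∫⁻ x, u x ^ γ * w x ^ δ ≤ (∫⁻ x, u x) ^ γ * (∫⁻ x, w x) ^ δ := by
  rcases eq_or_lt_of_le hδ with hδ0 | hδ0
  · have : γ = 1 := by linarith
    subst this
    simp [← hδ0]
  · have hγ1 : γ < 1 := by linarith
    have hconj : (1 / γ).HolderConjugate (1 / δ) := by
      rw [Real.holderConjugate_iff]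
      constructor
      · rw [lt_div_iff₀ hγ]; linarith
      · simp only [one_div, inv_inv]; exact hγδ
    have := ENNReal.lintegral_mul_le_Lp_mul_Lq volume hconj
      (hu.pow_const γ) (hw.pow_const δ)
    simp only [Pi.mul_apply] at this
    have e1 : ∀ x, (u x ^ γ) ^ (1 / γ) = u x := fun x => by
      rw [← ENNReal.rpow_mul, mul_one_div_cancel hγ.ne', ENNReal.rpow_one]
    have e2 : ∀ x, (w x ^ δ) ^ (1 / δ) = w x := fun x => by
      rw [← ENNReal.rpow_mul, mul_one_div_cancel hδ0.ne', ENNReal.rpow_one]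
    simp only [e1, e2, one_div_one_div] at this
    exact this

lemma ball_one (k' : ℝ) (hk' : 0 ≤ k') (g : E3 → ℝ≥0∞) (R : ℝ) (hR : 0 < R) :
    ∫⁻ v in Metric.closedBall (0 : E3) R, ENNReal.ofReal (‖v‖ ^ k') * g v
      ≤ (∫⁻ v, g v) * ENNReal.ofReal R ^ k' := by
  have h1 : ∫⁻ v in Metric.closedBall (0 : E3) R, ENNReal.ofReal (‖v‖ ^ k') * g v
      ≤ ∫⁻ v in Metric.closedBall (0 : E3) R, ENNReal.ofReal R ^ k' * g v := by
    refine setLIntegral_mono' measurableSet_closedBall fun v hv => ?_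
    gcongr ?_ * g v
    rw [ENNReal.ofReal_rpow_of_pos hR]
    exact ENNReal.ofReal_le_ofReal
      (Real.rpow_le_rpow (norm_nonneg _) (mem_closedBall_zero_iff.1 hv) hk')
  refine h1.trans ?_
  rw [lintegral_const_mul' _ _ (by simp [ENNReal.rpow_eq_top_iff]; intro h; exact absurd h hR.not_ge)]
  rw [mul_comm]
  gcongr
  exact Measure.restrict_le_self

lemma ball_top (k' : ℝ) (hk' : 0 ≤ k') (g : E3 → ℝ≥0∞) (S : ℝ≥0∞) (hS : S ≠ ⊤)
    (hgS : ∀ᵐ v, g v ≤ S) (R : ℝ) (hR : 0 < R) :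
    ∫⁻ v in Metric.closedBall (0 : E3) R, ENNReal.ofReal (‖v‖ ^ k') * g v
      ≤ S * volume (Metric.ball (0 : E3) 1) * ENNReal.ofReal R ^ (k' + 3) := by
  have h1 : ∫⁻ v in Metric.closedBall (0 : E3) R, ENNReal.ofReal (‖v‖ ^ k') * g v
      ≤ ∫⁻ v in Metric.closedBall (0 : E3) R, S * ENNReal.ofReal (‖v‖ ^ k') := by
    refine setLIntegral_mono_ae' measurableSet_closedBall ?_
    filter_upwards [hgS] with v hv _
    rw [mul_comm S _]
    exact mul_le_mul' le_rfl hv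
  refine h1.trans ?_
  rw [lintegral_const_mul' _ _ hS]
  calc S * ∫⁻ v in Metric.closedBall (0 : E3) R, ENNReal.ofReal (‖v‖ ^ k')
      ≤ S * (ENNReal.ofReal R ^ (k' + 3) * volume (Metric.ball (0 : E3) 1)) := by
        gcongr
        exact ball_rpow_bound k' R hk' hR
  _ = S * volume (Metric.ball (0 : E3) 1) * ENNReal.ofReal R ^ (k' + 3) := by ring

lemma measurable_wt (c : ℝ) : Measurable fun v : E3 => ENNReal.ofReal (‖v‖ ^ c) := by
  measurability

lemma ball_holder (p' q' : ℝ) (hpq : p'.HolderConjugate q') (k' : ℝ) (hk' : 0 ≤ k')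
    (g : E3 → ℝ≥0∞) (hg : AEMeasurable g volume) (R : ℝ) (hR : 0 < R) :
    ∫⁻ v in Metric.closedBall (0 : E3) R, ENNReal.ofReal (‖v‖ ^ k') * g v
      ≤ volume (Metric.ball (0 : E3) 1) ^ (1 / q') * (∫⁻ v, g v ^ p') ^ (1 / p')
        * ENNReal.ofReal R ^ (k' + 3 / q') := by
  have hq'0 : 0 < q' := hpq.symm.pos
  have h1 := ENNReal.lintegral_mul_le_Lp_mul_Lq (volume.restrict (Metric.closedBall (0 : E3) R))
    hpq hg.restrict (measurable_wt k').aemeasurable.restrict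
  simp only [Pi.mul_apply] at h1
  have h2 : (∫⁻ v in Metric.closedBall (0 : E3) R, g v ^ p') ^ (1 / p')
      ≤ (∫⁻ v, g v ^ p') ^ (1 / p') :=
    ENNReal.rpow_le_rpow (setLIntegral_le_lintegral _ _) (by have := hpq.pos; positivity)
  have h3 : (∫⁻ v in Metric.closedBall (0 : E3) R, ENNReal.ofReal (‖v‖ ^ k') ^ q') ^ (1 / q')
      ≤ volume (Metric.ball (0 : E3) 1) ^ (1 / q') * ENNReal.ofReal R ^ (k' + 3 / q') := by
    have e1 : ∀ v : E3, ENNReal.ofReal (‖v‖ ^ k') ^ q' = ENNReal.ofReal (‖v‖ ^ (k' * q')) := by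
      intro v
      rw [ENNReal.ofReal_rpow_of_nonneg (Real.rpow_nonneg (norm_nonneg _) _) hq'0.le,
        ← Real.rpow_mul (norm_nonneg _)]
    simp_rw [e1]
    calc (∫⁻ v in Metric.closedBall (0 : E3) R, ENNReal.ofReal (‖v‖ ^ (k' * q'))) ^ (1 / q')
        ≤ (ENNReal.ofReal R ^ (k' * q' + 3) * volume (Metric.ball (0 : E3) 1)) ^ (1 / q') :=
          ENNReal.rpow_le_rpow (ball_rpow_bound (k' * q') R (by positivity) hR) (by positivity)
    _ = volume (Metric.ball (0 : E3) 1) ^ (1 / q') * ENNReal.ofReal R ^ (k' + 3 / q') := by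
        rw [ENNReal.mul_rpow_of_nonneg _ _ (by positivity), ← ENNReal.rpow_mul,
          show (k' * q' + 3) * (1 / q') = k' + 3 / q' by field_simp, mul_comm]
  calc ∫⁻ v in Metric.closedBall (0 : E3) R, ENNReal.ofReal (‖v‖ ^ k') * g v
      = ∫⁻ v in Metric.closedBall (0 : E3) R, g v * ENNReal.ofReal (‖v‖ ^ k') := by
        simp_rw [mul_comm]
  _ ≤ (∫⁻ v in Metric.closedBall (0 : E3) R, g v ^ p') ^ (1 / p')
        * (∫⁻ v in Metric.closedBall (0 : E3) R, ENNReal.ofReal (‖v‖ ^ k') ^ q') ^ (1 / q') := h1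
  _ ≤ (∫⁻ v, g v ^ p') ^ (1 / p')
        * (volume (Metric.ball (0 : E3) 1) ^ (1 / q') * ENNReal.ofReal R ^ (k' + 3 / q')) :=
        mul_le_mul' h2 h3
  _ = volume (Metric.ball (0 : E3) 1) ^ (1 / q') * (∫⁻ v, g v ^ p') ^ (1 / p')
        * ENNReal.ofReal R ^ (k' + 3 / q') := by ring

lemma split_opt (k k' s : ℝ) (hkk : k' < k) (hs : 0 ≤ s)
    (g : E3 → ℝ≥0∞) (hg : Measurable g) (a : ℝ≥0∞) (ha : a ≠ ⊤)
    (hb : (∫⁻ v, ENNReal.ofReal (‖v‖ ^ k) * g v) ≠ ⊤)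
    (hball : ∀ R : ℝ, 0 < R →
      ∫⁻ v in Metric.closedBall (0 : E3) R, ENNReal.ofReal (‖v‖ ^ k') * g v
        ≤ a * ENNReal.ofReal R ^ s) :
    (∫⁻ v, ENNReal.ofReal (‖v‖ ^ k') * g v)
      ≤ 2 * a ^ ((k - k') / (s + (k - k')))
        * (∫⁻ v, ENNReal.ofReal (‖v‖ ^ k) * g v) ^ (s / (s + (k - k'))) := by
  apply opt_lemma s (k - k') hs (by linarith) a _ _ ha hb
  intro r hr0 hrt
  have hR : 0 < r.toReal := ENNReal.toReal_pos hr0 hrt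
  rw [← lintegral_add_compl (fun v => ENNReal.ofReal (‖v‖ ^ k') * g v)
    (measurableSet_closedBall (x := (0 : E3)) (ε := r.toReal))]
  gcongr
  · have := hball r.toReal hR
    rwa [ENNReal.ofReal_toReal hrt] at this
  · have := tail_bound k k' hkk.le r.toReal hR g hg
    rw [ENNReal.ofReal_toReal hrt] at this
    rw [mul_comm]
    exact this

lemma integrate_opt (α β ℓ : ℝ) (hℓ : 0 ≤ ℓ) (c₀ : ℝ≥0∞) (hc₀ : c₀ ≠ ⊤)
    (m A b : E3 → ℝ≥0∞) (hpt : ∀ᵐ x, m x ≤ c₀ * A x ^ α * b x ^ β) :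
    ∫⁻ x, m x ^ ℓ ≤ c₀ ^ ℓ * ∫⁻ x, A x ^ (α * ℓ) * b x ^ (β * ℓ) := by
  have step : ∫⁻ x, m x ^ ℓ ≤ ∫⁻ x, c₀ ^ ℓ * (A x ^ (α * ℓ) * b x ^ (β * ℓ)) := by
    refine lintegral_mono_ae ?_
    filter_upwards [hpt] with x hx
    calc m x ^ ℓ ≤ (c₀ * A x ^ α * b x ^ β) ^ ℓ := ENNReal.rpow_le_rpow hx hℓ
    _ = c₀ ^ ℓ * (A x ^ (α * ℓ) * b x ^ (β * ℓ)) := by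
        rw [ENNReal.mul_rpow_of_nonneg _ _ hℓ, ENNReal.mul_rpow_of_nonneg _ _ hℓ,
          ← ENNReal.rpow_mul, ← ENNReal.rpow_mul, mul_assoc]
  refine step.trans ?_
  rw [lintegral_const_mul' _ _ (ENNReal.rpow_ne_top_of_nonneg hℓ hc₀)]

lemma final_assembly (ℓ α β : ℝ) (hℓ : 0 < ℓ) (hα : 0 ≤ α) (hβ : 0 ≤ β)
    (c₀ E M X : ℝ≥0∞) (hc₀ : c₀ ≠ ⊤) (hE : E ≠ ⊤) (hM : M ≠ ⊤)
    (hX : X ≤ c₀ ^ ℓ * (E ^ (α * ℓ) * M ^ (β * ℓ))) :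
    X ^ (1 / ℓ) ≤ c₀ * E ^ α * M ^ β ∧ X ^ (1 / ℓ) < ⊤ := by
  have h2 : (c₀ ^ ℓ * (E ^ (α * ℓ) * M ^ (β * ℓ))) ^ (1 / ℓ) = c₀ * E ^ α * M ^ β := by
    rw [ENNReal.mul_rpow_of_nonneg _ _ (by positivity),
      ENNReal.mul_rpow_of_nonneg _ _ (by positivity),
      ← ENNReal.rpow_mul, ← ENNReal.rpow_mul, ← ENNReal.rpow_mul,
      mul_one_div_cancel hℓ.ne', show α * ℓ * (1 / ℓ) = α by field_simp,
      show β * ℓ * (1 / ℓ) = β by field_simp, ENNReal.rpow_one, mul_assoc]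
  have h1 : X ^ (1 / ℓ) ≤ c₀ * E ^ α * M ^ β := by
    rw [← h2]
    exact ENNReal.rpow_le_rpow hX (by positivity)
  refine ⟨h1, h1.trans_lt ?_⟩
  refine ENNReal.mul_lt_top (ENNReal.mul_lt_top hc₀.lt_top ?_) ?_
  · exact (ENNReal.rpow_ne_top_of_nonneg hα hE).lt_top
  · exact (ENNReal.rpow_ne_top_of_nonneg hβ hM).lt_top

lemma workhorse (k k' s t p' ℓ α β : ℝ) (hkk : k' < k) (ht : t = k - k') (hs : 0 ≤ s)
    (hp' : 1 ≤ p') (hℓ : ℓ = (s + t) / (s + t / p'))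
    (hα : α = t / (s + t)) (hβ : β = s / (s + t))
    (cq : ℝ≥0∞) (hcq0 : cq ≠ 0) (hcqt : cq ≠ ⊤)
    (g : E3 × E3 → ℝ≥0∞) (hg : Measurable g)
    (E M : ℝ≥0∞) (hE : E ≠ ⊤) (hM : M ≠ ⊤)
    (hEeq : E ^ p' = ∫⁻ x, ∫⁻ v, g (x, v) ^ p')
    (hMeq : M = ∫⁻ x, ∫⁻ v, ENNReal.ofReal (‖v‖ ^ k) * g (x, v))
    (hball : ∀ x, ∀ R : ℝ, 0 < R →
      ∫⁻ v in Metric.closedBall (0 : E3) R, ENNReal.ofReal (‖v‖ ^ k') * g (x, v)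
        ≤ cq * (∫⁻ v, g (x, v) ^ p') ^ (1 / p') * ENNReal.ofReal R ^ s) :
    (∫⁻ x, (∫⁻ v, ENNReal.ofReal (‖v‖ ^ k') * g (x, v)) ^ ℓ) ^ (1 / ℓ)
      ≤ 2 * cq ^ α * E ^ α * M ^ β
      ∧ (∫⁻ x, (∫⁻ v, ENNReal.ofReal (‖v‖ ^ k') * g (x, v)) ^ ℓ) ^ (1 / ℓ) < ⊤ := by
  have htpos : 0 < t := by rw [ht]; linarith
  have hst : 0 < s + t := by linarith
  have hp'0 : 0 < p' := by linarith
  have hstp : 0 < s + t / p' := by positivity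
  have hℓpos : 0 < ℓ := by rw [hℓ]; positivity
  have hαpos : 0 < α := by rw [hα]; positivity
  have hβ0 : 0 ≤ β := by rw [hβ]; positivity
  set u : E3 → ℝ≥0∞ := fun x => ∫⁻ v, g (x, v) ^ p' with hu
  set b : E3 → ℝ≥0∞ := fun x => ∫⁻ v, ENNReal.ofReal (‖v‖ ^ k) * g (x, v) with hbdef
  have hu_meas : Measurable u :=
    Measurable.lintegral_prod_right' (hg.pow_const p')
  have hb_meas : Measurable b :=
    Measurable.lintegral_prod_right' (((measurable_wt k).comp measurable_snd).mul hg)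
  have hp'ne : p' ≠ 0 := hp'0.ne'
  have hstne : s + t ≠ 0 := hst.ne'
  have hstpne : s + t / p' ≠ 0 := hstp.ne'
  have hu_fin : ∀ᵐ x, u x ≠ ⊤ := by
    have h1 : ∫⁻ x, u x ≠ ⊤ := hEeq ▸ ENNReal.rpow_ne_top_of_nonneg hp'0.le hE
    filter_upwards [ae_lt_top hu_meas h1] with x hx using hx.ne
  have hb_fin : ∀ᵐ x, b x ≠ ⊤ := by
    have h1 : ∫⁻ x, b x ≠ ⊤ := hMeq ▸ hM
    filter_upwards [ae_lt_top hb_meas h1] with x hx using hx.ne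
  have hpt : ∀ᵐ x, (∫⁻ v, ENNReal.ofReal (‖v‖ ^ k') * g (x, v))
      ≤ 2 * cq ^ α * (u x ^ (1 / p')) ^ α * b x ^ β := by
    filter_upwards [hu_fin, hb_fin] with x hux hbx
    have hA_fin : u x ^ (1 / p') ≠ ⊤ := ENNReal.rpow_ne_top_of_nonneg (by positivity) hux
    have hsp := split_opt k k' s hkk hs (fun v => g (x, v)) (hg.comp measurable_prodMk_left)
      (cq * u x ^ (1 / p')) (ENNReal.mul_ne_top hcqt hA_fin) hbx (fun R hR => hball x R hR)
    rw [← ht, ← hα, ← hβ] at hsp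
    refine hsp.trans (le_of_eq ?_)
    rw [ENNReal.mul_rpow_of_nonneg _ _ hαpos.le, ← mul_assoc]
  have hc₀ne : (2 : ℝ≥0∞) * cq ^ α ≠ ⊤ :=
    ENNReal.mul_ne_top (by simp) (ENNReal.rpow_ne_top_of_nonneg hαpos.le hcqt)
  have hint := integrate_opt α β ℓ hℓpos.le (2 * cq ^ α) hc₀ne
    _ (fun x => u x ^ (1 / p')) b hpt
  have hconv : ∫⁻ x, (u x ^ (1 / p')) ^ (α * ℓ) * b x ^ (β * ℓ)
      = ∫⁻ x, u x ^ (1 / p' * (α * ℓ)) * b x ^ (β * ℓ) :=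
    lintegral_congr fun x => by rw [← ENNReal.rpow_mul]
  have hhold : ∫⁻ x, u x ^ (1 / p' * (α * ℓ)) * b x ^ (β * ℓ)
      ≤ (∫⁻ x, u x) ^ (1 / p' * (α * ℓ)) * (∫⁻ x, b x) ^ (β * ℓ) := by
    refine holder_simple u b hu_meas.aemeasurable hb_meas.aemeasurable _ _
      (by positivity) (by positivity) ?_
    rw [hℓ, hα, hβ]
    field_simp
    ring
  have hEu : (∫⁻ x, u x) ^ (1 / p' * (α * ℓ)) = E ^ (α * ℓ) := by
    rw [← hEeq, ← ENNReal.rpow_mul, show p' * (1 / p' * (α * ℓ)) = α * ℓ by field_simp]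
  have hX : (∫⁻ x, (∫⁻ v, ENNReal.ofReal (‖v‖ ^ k') * g (x, v)) ^ ℓ)
      ≤ (2 * cq ^ α) ^ ℓ * (E ^ (α * ℓ) * M ^ (β * ℓ)) := by
    refine hint.trans ?_
    rw [hconv]
    gcongr
    refine hhold.trans (le_of_eq ?_)
    rw [hEu, hMeq]
  exact final_assembly ℓ α β hℓpos hαpos.le hβ0 (2 * cq ^ α) E M _ hc₀ne hE hM hX

lemma workhorse_top (k k' s t ℓ α β : ℝ) (hkk : k' < k) (ht : t = k - k') (hs : 0 < s)
    (hℓ : ℓ = (s + t) / s) (hα : α = t / (s + t)) (hβ : β = s / (s + t))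
    (cq : ℝ≥0∞) (hcq0 : cq ≠ 0) (hcqt : cq ≠ ⊤)
    (g : E3 × E3 → ℝ≥0∞) (hg : Measurable g)
    (E M : ℝ≥0∞) (hE : E ≠ ⊤) (hM : M ≠ ⊤)
    (hMeq : M = ∫⁻ x, ∫⁻ v, ENNReal.ofReal (‖v‖ ^ k) * g (x, v))
    (A : E3 → ℝ≥0∞) (hAE : ∀ᵐ x, A x ≤ E)
    (hball : ∀ᵐ x, ∀ R : ℝ, 0 < R →
      ∫⁻ v in Metric.closedBall (0 : E3) R, ENNReal.ofReal (‖v‖ ^ k') * g (x, v)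
        ≤ cq * A x * ENNReal.ofReal R ^ s) :
    (∫⁻ x, (∫⁻ v, ENNReal.ofReal (‖v‖ ^ k') * g (x, v)) ^ ℓ) ^ (1 / ℓ)
      ≤ 2 * cq ^ α * E ^ α * M ^ β
      ∧ (∫⁻ x, (∫⁻ v, ENNReal.ofReal (‖v‖ ^ k') * g (x, v)) ^ ℓ) ^ (1 / ℓ) < ⊤ := by
  have htpos : 0 < t := by rw [ht]; linarith
  have hst : 0 < s + t := by linarith
  have hℓpos : 0 < ℓ := by rw [hℓ]; positivity
  have hαpos : 0 < α := by rw [hα]; positivity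
  have hβ0 : 0 ≤ β := by rw [hβ]; positivity
  have hβℓ : β * ℓ = 1 := by rw [hβ, hℓ]; field_simp
  set b : E3 → ℝ≥0∞ := fun x => ∫⁻ v, ENNReal.ofReal (‖v‖ ^ k) * g (x, v) with hbdef
  have hb_meas : Measurable b :=
    Measurable.lintegral_prod_right' (((measurable_wt k).comp measurable_snd).mul hg)
  have hb_fin : ∀ᵐ x, b x ≠ ⊤ := by
    have h1 : ∫⁻ x, b x ≠ ⊤ := hMeq ▸ hM
    filter_upwards [ae_lt_top hb_meas h1] with x hx using hx.ne
  have hpt : ∀ᵐ x, (∫⁻ v, ENNReal.ofReal (‖v‖ ^ k') * g (x, v))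
      ≤ 2 * cq ^ α * E ^ α * (fun _ : E3 => (1 : ℝ≥0∞)) x ^ α * b x ^ β := by
    filter_upwards [hb_fin, hAE, hball] with x hbx hAx hbal
    have hsp := split_opt k k' s hkk hs.le (fun v => g (x, v)) (hg.comp measurable_prodMk_left)
      (cq * A x) (ENNReal.mul_ne_top hcqt (ne_top_of_le_ne_top hE hAx)) hbx hbal
    rw [← ht, ← hα, ← hβ] at hsp
    refine hsp.trans ?_
    calc 2 * (cq * A x) ^ α * b x ^ β ≤ 2 * (cq * E) ^ α * b x ^ β := by
          gcongr
    _ = 2 * cq ^ α * E ^ α * (fun _ : E3 => (1 : ℝ≥0∞)) x ^ α * b x ^ β := by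
        rw [ENNReal.mul_rpow_of_ne_top hcqt hE, ENNReal.one_rpow, mul_one, ← mul_assoc]
  have hc₀ne : (2 : ℝ≥0∞) * cq ^ α * E ^ α ≠ ⊤ :=
    ENNReal.mul_ne_top (ENNReal.mul_ne_top (by simp)
      (ENNReal.rpow_ne_top_of_nonneg hαpos.le hcqt)) (ENNReal.rpow_ne_top_of_nonneg hαpos.le hE)
  have hint := integrate_opt α β ℓ hℓpos.le (2 * cq ^ α * E ^ α) hc₀ne
    _ (fun _ : E3 => (1 : ℝ≥0∞)) b hpt
  have hX : (∫⁻ x, (∫⁻ v, ENNReal.ofReal (‖v‖ ^ k') * g (x, v)) ^ ℓ)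
      ≤ (2 * cq ^ α) ^ ℓ * (E ^ (α * ℓ) * M ^ (β * ℓ)) := by
    refine hint.trans (le_of_eq ?_)
    have e1 : ∫⁻ x, (fun _ : E3 => (1 : ℝ≥0∞)) x ^ (α * ℓ) * b x ^ (β * ℓ) = M := by
      simp only [ENNReal.one_rpow, one_mul, hβℓ, ENNReal.rpow_one]
      exact hMeq.symm
    rw [e1, ENNReal.mul_rpow_of_ne_top (ENNReal.mul_ne_top (by simp)
        (ENNReal.rpow_ne_top_of_nonneg hαpos.le hcqt)) (ENNReal.rpow_ne_top_of_nonneg hαpos.le hE),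
      ← ENNReal.rpow_mul E, hβℓ, ENNReal.rpow_one, mul_assoc]
  exact final_assembly ℓ α β hℓpos hαpos.le hβ0 (2 * cq ^ α) E M _
    (ENNReal.mul_ne_top (by simp) (ENNReal.rpow_ne_top_of_nonneg hαpos.le hcqt)) hE hM hX

lemma conj_cases (p q : ℝ≥0∞) (hp : 1 ≤ p) (hpq : 1 / p + 1 / q = 1) :
    (p = 1 ∧ q = ⊤) ∨ (p = ⊤ ∧ q = 1) ∨
      (p ≠ 0 ∧ p ≠ ⊤ ∧ p.toReal.HolderConjugate q.toReal) := by
  have hc : p.HolderConjugate q := ENNReal.holderConjugate_iff.2 (by rwa [one_div, one_div] at hpq)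
  rcases eq_or_lt_of_le hp with h1 | h1
  · left
    refine ⟨h1.symm, ?_⟩
    have : q = 1 + (p - 1)⁻¹ := ENNReal.HolderConjugate.conj_eq
    rw [← h1] at this
    simpa using this
  rcases eq_or_ne p ⊤ with h2 | h2
  · right; left
    refine ⟨h2, ?_⟩
    have : q = 1 + (p - 1)⁻¹ := ENNReal.HolderConjugate.conj_eq
    rw [h2] at this
    simpa using this
  · right; right
    have hp0 : p ≠ 0 := (zero_lt_one.trans_le hp).ne'
    have hq0 : q ≠ 0 := ENNReal.HolderConjugate.ne_zero q p
    have hqt : q ≠ ⊤ := by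
      have : q = 1 + (p - 1)⁻¹ := ENNReal.HolderConjugate.conj_eq
      rw [this]
      refine ENNReal.add_ne_top.2 ⟨one_ne_top, ?_⟩
      simp only [Ne, ENNReal.inv_eq_top]
      rw [tsub_eq_zero_iff_le]
      exact fun h => absurd h1 h.not_gt
    refine ⟨hp0, h2, Real.holderConjugate_iff.2 ⟨?_, ?_⟩⟩
    · rw [← ENNReal.toReal_one]
      exact (ENNReal.toReal_lt_toReal one_ne_top h2).2 h1
    · have := congrArg ENNReal.toReal (ENNReal.HolderConjugate.inv_add_inv_eq_one p q)
      rw [ENNReal.toReal_add (by simp [hp0]) (by simp [hq0]), ENNReal.toReal_inv,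
        ENNReal.toReal_inv, ENNReal.toReal_one] at this
      exact this

lemma lint_prod (F : E3 × E3 → ℝ≥0∞) (hF : Measurable F) :
    ∫⁻ z, F z = ∫⁻ x, ∫⁻ v, F (x, v) := by
  rw [MeasureTheory.Measure.volume_eq_prod]
  exact lintegral_prod F hF.aemeasurable

lemma eLpNorm_pow_eq (p : ℝ≥0∞) (hp0 : p ≠ 0) (hpt : p ≠ ⊤) (f : E3 × E3 → ℝ)
    (hf : Measurable f) (hf0 : ∀ z, 0 ≤ f z) :
    eLpNorm f p volume ^ p.toReal
      = ∫⁻ x, ∫⁻ v, ENNReal.ofReal (f (x, v)) ^ p.toReal := by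
  have hptr : p.toReal ≠ 0 := ENNReal.toReal_ne_zero.2 ⟨hp0, hpt⟩
  rw [eLpNorm_eq_lintegral_rpow_enorm_toReal hp0 hpt, ← ENNReal.rpow_mul, one_div,
    inv_mul_cancel₀ hptr, ENNReal.rpow_one]
  rw [← lint_prod (fun z => ENNReal.ofReal (f z) ^ p.toReal)
    ((ENNReal.measurable_ofReal.comp hf).pow_const _)]
  refine lintegral_congr fun z => ?_
  rw [Real.enorm_eq_ofReal (hf0 z)]

lemma slice_essSup_le (f : E3 × E3 → ℝ) :
    ∀ᵐ x, eLpNormEssSup (fun v => f (x, v)) volume ≤ eLpNormEssSup f volume := by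
  have h := enorm_ae_le_eLpNormEssSup f (volume : Measure (E3 × E3))
  rw [MeasureTheory.Measure.volume_eq_prod] at h
  filter_upwards [Measure.ae_ae_of_ae_prod h] with x hx
  exact essSup_le_of_ae_le _ hx

/-- Velocity moment estimate (Lemma 3.2): for a nonnegative phase-space density `f`
with `‖f‖_{L^p} < ∞` and finite `k`-th velocity moment, the `k'`-th moment density
lies in `L^ℓ` with `ℓ = (k + 3/q)/(k' + 3/q + (k-k')/p)` and satisfies the stated bound. -/
theorem velocity_moment_estimate (p q : ℝ≥0∞) (hp : 1 ≤ p) (hpq : 1 / p + 1 / q = 1)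
    (k k' : ℝ) (hk' : 0 ≤ k') (hk : k' ≤ k) :
    ∃ C : ℝ, 0 < C ∧
      ∀ f : E3 × E3 → ℝ, Measurable f → (∀ z, 0 ≤ f z) →
        eLpNorm f p volume < ⊤ →
        (∫⁻ x, ∫⁻ v, ENNReal.ofReal (‖v‖ ^ k * f (x, v))) < ⊤ →
        (∫⁻ x, (∫⁻ v, ENNReal.ofReal (‖v‖ ^ k' * f (x, v)))
              ^ ((k + 3 / q.toReal) / (k' + 3 / q.toReal + (k - k') / p.toReal)))
            ^ ((k' + 3 / q.toReal + (k - k') / p.toReal) / (k + 3 / q.toReal)) < ⊤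
        ∧ (∫⁻ x, (∫⁻ v, ENNReal.ofReal (‖v‖ ^ k' * f (x, v)))
              ^ ((k + 3 / q.toReal) / (k' + 3 / q.toReal + (k - k') / p.toReal)))
            ^ ((k' + 3 / q.toReal + (k - k') / p.toReal) / (k + 3 / q.toReal))
          ≤ ENNReal.ofReal C
              * eLpNorm f p volume ^ ((k - k') / (k + 3 / q.toReal))
              * (∫⁻ x, ∫⁻ v, ENNReal.ofReal (‖v‖ ^ k * f (x, v)))
                  ^ ((k' + 3 / q.toReal) / (k + 3 / q.toReal)) := by
  have hk0 : 0 ≤ k := le_trans hk' hk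
  have h3q : 0 ≤ 3 / q.toReal := by positivity
  by_cases hD : k + 3 / q.toReal = 0
  · -- degenerate case
    have hkz : k = 0 := by linarith
    have h3z : 3 / q.toReal = 0 := by linarith
    have hk'z : k' = 0 := le_antisymm (hkz ▸ hk) hk'
    refine ⟨1, one_pos, fun f hf hf0 hE hM => ?_⟩
    simp only [hkz, hk'z, h3z, sub_self, zero_div, zero_add, add_zero, ENNReal.rpow_zero,
      ENNReal.ofReal_one, one_mul, mul_one]
    exact ⟨one_lt_top, le_refl _⟩
  · have hDpos : 0 < k + 3 / q.toReal := lt_of_le_of_ne (by positivity) (Ne.symm hD)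
    by_cases hkk : k' = k
    · -- k' = k case
      subst hkk
      refine ⟨1, one_pos, fun f hf hf0 hE hM => ?_⟩
      simp only [sub_self, zero_div, add_zero, div_self hD, ENNReal.rpow_one,
        ENNReal.rpow_zero, ENNReal.ofReal_one, one_mul, mul_one]
      exact ⟨hM, le_refl _⟩
    · have hkklt : k' < k := lt_of_le_of_ne hk hkk
      rcases conj_cases p q hp hpq with ⟨hp1, hq⟩ | ⟨hpt, hq⟩ | ⟨hp0, hptop, hconj⟩
      · -- p = 1, q = ⊤
        subst hp1; subst hq
        refine ⟨2, two_pos, fun f hf hf0 hE hM => ?_⟩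
        have hg : Measurable fun z : E3 × E3 => ENNReal.ofReal (f z) :=
          ENNReal.measurable_ofReal.comp hf
        simp only [ENNReal.toReal_top, ENNReal.toReal_one, _root_.div_zero, add_zero, div_one]
        simp_rw [ENNReal.ofReal_mul (Real.rpow_nonneg (norm_nonneg _) _)] at hM ⊢
        rw [show (k' + (k - k')) / k = 1 / (k / (k' + (k - k'))) from by rw [one_div_div]]
        obtain ⟨h1, h2⟩ := workhorse k k' k' (k - k') 1 (k / (k' + (k - k')))
          ((k - k') / k) (k' / k) hkklt rfl hk' le_rfl
          (by rw [div_one, show k' + (k - k') = k from by ring])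
          (by rw [show k' + (k - k') = k from by ring])
          (by rw [show k' + (k - k') = k from by ring])
          1 one_ne_zero one_ne_top (fun z => ENNReal.ofReal (f z)) hg
          (eLpNorm f 1 volume) _ hE.ne hM.ne
          (by simpa using eLpNorm_pow_eq 1 one_ne_zero one_ne_top f hf hf0) rfl
          (fun x R hR => by
            have hb := ball_one k' hk' (fun v => ENNReal.ofReal (f (x, v))) R hR
            simpa using hb)
        refine ⟨h2, h1.trans (le_of_eq ?_)⟩
        rw [ENNReal.one_rpow, mul_one]
        norm_num
      · -- p = ⊤, q = 1
        subst hpt; subst hq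
        set vB := volume (Metric.ball (0 : E3) 1) with hvB
        set α := (k - k') / (k + 3) with hαdef
        have hαpos : 0 < α := by
          rw [hαdef]
          exact div_pos (by linarith) (by linarith)
        have hcqα0 : vB ^ α ≠ 0 := by
          exact (ENNReal.rpow_pos vB_pos vB_lt_top.ne).ne'
        have hcqαt : vB ^ α ≠ ⊤ := ENNReal.rpow_ne_top_of_nonneg hαpos.le vB_lt_top.ne
        have hCne : (2 : ℝ≥0∞) * vB ^ α ≠ ⊤ := ENNReal.mul_ne_top (by simp) hcqαt
        refine ⟨(2 * vB ^ α).toReal, ENNReal.toReal_pos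
          (by simp [hcqα0]) hCne, fun f hf hf0 hE hM => ?_⟩
        have hg : Measurable fun z : E3 × E3 => ENNReal.ofReal (f z) :=
          ENNReal.measurable_ofReal.comp hf
        have hEne : eLpNorm f ⊤ volume ≠ ⊤ := hE.ne
        simp only [ENNReal.toReal_top, ENNReal.toReal_one, _root_.div_zero, add_zero, div_one]
        simp_rw [ENNReal.ofReal_mul (Real.rpow_nonneg (norm_nonneg _) _)] at hM ⊢
        rw [show (k' + 3) / (k + 3) = 1 / ((k + 3) / (k' + 3)) from by rw [one_div_div]]
        have hAE : ∀ᵐ x, eLpNormEssSup (fun v => f (x, v)) volume ≤ eLpNorm f ⊤ volume := by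
          filter_upwards [slice_essSup_le f] with x hx
          rw [eLpNorm_exponent_top]
          exact hx
        have hball : ∀ᵐ x, ∀ R : ℝ, 0 < R →
            ∫⁻ v in Metric.closedBall (0 : E3) R,
              ENNReal.ofReal (‖v‖ ^ k') * ENNReal.ofReal (f (x, v))
            ≤ vB * eLpNormEssSup (fun v => f (x, v)) volume * ENNReal.ofReal R ^ (k' + 3) := by
          filter_upwards [hAE] with x hx
          intro R hR
          have hgS : ∀ᵐ v, ENNReal.ofReal (f (x, v))
              ≤ eLpNormEssSup (fun v => f (x, v)) volume := by
            filter_upwards [ae_le_eLpNormEssSup (f := fun v => f (x, v)) (μ := volume)] with v hv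
            rwa [Real.enorm_eq_ofReal (hf0 _)] at hv
          have := ball_top k' hk' (fun v => ENNReal.ofReal (f (x, v)))
            (eLpNormEssSup (fun v => f (x, v)) volume) (ne_top_of_le_ne_top hEne hx) hgS R hR
          refine this.trans (le_of_eq ?_)
          rw [mul_comm vB _]
        obtain ⟨h1, h2⟩ := workhorse_top k k' (k' + 3) (k - k') ((k + 3) / (k' + 3))
          α ((k' + 3) / (k + 3)) hkklt rfl (by linarith)
          (by rw [show k' + 3 + (k - k') = k + 3 from by ring])
          (by rw [hαdef, show k' + 3 + (k - k') = k + 3 from by ring])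
          (by rw [show k' + 3 + (k - k') = k + 3 from by ring])
          vB vB_pos.ne' vB_lt_top.ne (fun z => ENNReal.ofReal (f z)) hg
          (eLpNorm f ⊤ volume) _ hEne hM.ne rfl
          (fun x => eLpNormEssSup (fun v => f (x, v)) volume) hAE hball
        refine ⟨h2, h1.trans (le_of_eq ?_)⟩
        rw [ENNReal.ofReal_toReal hCne, one_div_div, hαdef]
      · -- 1 < p < ⊤
        set q' := q.toReal with hq'def
        have hq'0 : 0 < q' := hconj.symm.pos
        set cq := volume (Metric.ball (0 : E3) 1) ^ (1 / q') with hcqdef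
        have hcq0 : cq ≠ 0 := by
          exact (ENNReal.rpow_pos vB_pos vB_lt_top.ne).ne'
        have hcqt : cq ≠ ⊤ := by
          exact ENNReal.rpow_ne_top_of_nonneg (by positivity) vB_lt_top.ne
        set α := (k - k') / (k + 3 / q') with hαdef
        have hαpos : 0 < α := by
          rw [hαdef]
          refine div_pos (by linarith) ?_
          positivity
        have hcqα0 : cq ^ α ≠ 0 := by
          simp [ENNReal.rpow_eq_zero_iff, hcq0, hcqt]
        have hcqαt : cq ^ α ≠ ⊤ := ENNReal.rpow_ne_top_of_nonneg hαpos.le hcqt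
        have hCne : (2 : ℝ≥0∞) * cq ^ α ≠ ⊤ := ENNReal.mul_ne_top (by simp) hcqαt
        refine ⟨(2 * cq ^ α).toReal, ENNReal.toReal_pos (by simp [hcqα0]) hCne,
          fun f hf hf0 hE hM => ?_⟩
        have hg : Measurable fun z : E3 × E3 => ENNReal.ofReal (f z) :=
          ENNReal.measurable_ofReal.comp hf
        simp_rw [ENNReal.ofReal_mul (Real.rpow_nonneg (norm_nonneg _) _)] at hM ⊢
        rw [show (k' + 3 / q' + (k - k') / p.toReal) / (k + 3 / q')
          = 1 / ((k + 3 / q') / (k' + 3 / q' + (k - k') / p.toReal)) from by rw [one_div_div]]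
        have hp'1 : 1 ≤ p.toReal := hconj.lt.le
        obtain ⟨h1, h2⟩ := workhorse k k' (k' + 3 / q') (k - k') p.toReal
          ((k + 3 / q') / (k' + 3 / q' + (k - k') / p.toReal)) α
          ((k' + 3 / q') / (k + 3 / q')) hkklt rfl (by positivity) hp'1
          (by rw [show k' + 3 / q' + (k - k') = k + 3 / q' from by ring])
          (by rw [hαdef, show k' + 3 / q' + (k - k') = k + 3 / q' from by ring])
          (by rw [show k' + 3 / q' + (k - k') = k + 3 / q' from by ring])
          cq hcq0 hcqt (fun z => ENNReal.ofReal (f z)) hg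
          (eLpNorm f p volume) _ hE.ne hM.ne
          (eLpNorm_pow_eq p hp0 hptop f hf hf0) rfl
          (fun x R hR => ball_holder p.toReal q' hconj k' hk'
            (fun v => ENNReal.ofReal (f (x, v))) (hg.comp measurable_prodMk_left).aemeasurable
            R hR)
        refine ⟨h2, h1.trans (le_of_eq ?_)⟩
        rw [ENNReal.ofReal_toReal hCne]
end
end
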